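/- Let F be a cumulative distribution function with hazard rate h on [t₀,∞). If t·h(t) → ∞ as t → ∞, then for every a with 0 < a < 1, F̄(t)/F̄(at) → 0 as t → ∞; consequently, for any 0 < a < b, F̄(t/a)/F̄(t/b) → 0 as t → ∞ (the tail F̄ is rapidly varying). -/

import Mathlib

open MeasureTheory Filter Set

noncomputable section

/-- `h` is a hazard rate for the upper tail of `F` on `[t₀, ∞)`:
`F̄(t₀) > 0`, `h` is nonnegative and locally integrable on `[t₀, ∞)`, and
`F̄(t) = F̄(t₀) · exp(−∫_{t₀}^t h(u) du)` for all `t ≥ t₀`. -/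
def HasHazardRate (F h : ℝ → ℝ) (t₀ : ℝ) : Prop :=
  0 < 1 - F t₀ ∧ (∀ t, t₀ ≤ t → 0 ≤ h t) ∧
    MeasureTheory.LocallyIntegrableOn h (Set.Ici t₀) ∧
    ∀ t, t₀ ≤ t → 1 - F t = (1 - F t₀) * Real.exp (-(∫ u in t₀..t, h u))

/-- `g`, positive on a neighborhood of `∞`, is regularly varying of index `ρ`:
for every `a > 0`, `g(at)/g(t) → a^ρ` as `t → ∞`. -/
def RegularlyVarying (g : ℝ → ℝ) (ρ : ℝ) : Prop :=
  (∀ᶠ t in Filter.atTop, 0 < g t) ∧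
    ∀ a : ℝ, 0 < a →
      Filter.Tendsto (fun t => g (a * t) / g t) Filter.atTop (nhds (a ^ ρ))

/-- `g` is smoothly varying of index `α` and order `m`: `g` is `m` times continuously
differentiable on a neighborhood of `∞` and `g^(m)` is regularly varying of index `α − m`. -/
def SmoothlyVarying (g : ℝ → ℝ) (α : ℝ) (m : ℕ) : Prop :=
  (∃ T : ℝ, ContDiffOn ℝ (m : ℕ∞) g (Set.Ici T)) ∧
    RegularlyVarying (iteratedDeriv m g) (α - m)

/-- Condition (BasicH): `h` is regularly varying of some index, `t·h(t) → ∞`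
and `h(t) → 0` as `t → ∞`. -/
def BasicH (h : ℝ → ℝ) : Prop :=
  (∃ ρ : ℝ, RegularlyVarying h ρ) ∧
    Filter.Tendsto (fun t => t * h t) Filter.atTop Filter.atTop ∧
    Filter.Tendsto h Filter.atTop (nhds 0)

/-- `F` is a cumulative distribution function on `ℝ`. -/
def IsCDF (F : ℝ → ℝ) : Prop :=
  Monotone F ∧ (∀ x, ContinuousWithinAt F (Set.Ici x) x) ∧
    Filter.Tendsto F Filter.atBot (nhds 0) ∧ Filter.Tendsto F Filter.atTop (nhds 1)

/-- if `t·h(t) → ∞` then the tail `F̄` is rapidly varying. -/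
theorem stmt_4 (F h : ℝ → ℝ) (t₀ : ℝ) (hF : IsCDF F)
    (hh : HasHazardRate F h t₀)
    (hth : Filter.Tendsto (fun t => t * h t) Filter.atTop Filter.atTop) :
    (∀ a : ℝ, 0 < a → a < 1 →
      Filter.Tendsto (fun t => (1 - F t) / (1 - F (a * t))) Filter.atTop (nhds 0)) ∧
    (∀ a b : ℝ, 0 < a → a < b →
      Filter.Tendsto (fun t => (1 - F (t / a)) / (1 - F (t / b))) Filter.atTop (nhds 0)) := by
  obtain ⟨hpos, hnn, hloc, heq⟩ := hh
  have hint : ∀ x y : ℝ, t₀ ≤ x → x ≤ y → IntervalIntegrable h volume x y := by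
    intro x y hx hxy
    have hsub : Set.Icc x y ⊆ Set.Ici t₀ := fun u hu => le_trans hx hu.1
    have := hloc.integrableOn_compact_subset hsub isCompact_Icc
    exact (intervalIntegrable_iff_integrableOn_Icc_of_le hxy).2 this
  have main : ∀ a : ℝ, 0 < a → a < 1 →
      Filter.Tendsto (fun t => (1 - F t) / (1 - F (a * t))) Filter.atTop (nhds 0) := by
    intro a ha ha1
    have hloga : 0 < Real.log (1 / a) := Real.log_pos (by rw [lt_div_iff₀ ha]; linarith)
    have hI : Filter.Tendsto (fun t => ∫ u in a * t..t, h u) Filter.atTop Filter.atTop := by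
      rw [tendsto_atTop]
      intro M
      set M' : ℝ := max 1 (M / Real.log (1 / a)) with hM'
      have hM'pos : 0 < M' := lt_of_lt_of_le one_pos (le_max_left _ _)
      have hMle : M ≤ M' * Real.log (1 / a) := by
        rw [← div_le_iff₀ hloga]
        · exact le_max_right _ _
      obtain ⟨T, hT⟩ := eventually_atTop.mp ((tendsto_atTop.mp hth) M')
      filter_upwards [eventually_ge_atTop ((max T (max t₀ 1)) / a)] with t ht
      have hat : max T (max t₀ 1) ≤ a * t := by
        rw [← div_le_iff₀' ha] at *; exact ht
      have hT' : T ≤ a * t := le_trans (le_max_left _ _) hat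
      have ht0 : t₀ ≤ a * t := le_trans (le_trans (le_max_left _ _) (le_max_right _ _)) hat
      have h1at : (1:ℝ) ≤ a * t := le_trans (le_trans (le_max_right _ _) (le_max_right _ _)) hat
      have hatt : a * t ≤ t := by
        nlinarith [lt_of_lt_of_le zero_lt_one h1at]
      have hcomp : ∀ u ∈ Set.Icc (a * t) t, M' * (1 / u) ≤ h u := by
        intro u hu
        have hu0 : (0:ℝ) < u := lt_of_lt_of_le zero_lt_one (le_trans h1at hu.1)
        have := hT u (le_trans hT' hu.1)
        rw [mul_one_div, div_le_iff₀ hu0]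
        linarith [this]
      have hintc : IntervalIntegrable (fun u => M' * (1 / u)) volume (a * t) t := by
        apply ContinuousOn.intervalIntegrable
        apply ContinuousOn.mul continuousOn_const
        apply ContinuousOn.div continuousOn_const continuousOn_id
        intro u hu
        rw [Set.uIcc_of_le hatt] at hu
        exact ne_of_gt (lt_of_lt_of_le zero_lt_one (le_trans h1at hu.1))
      have hmono := intervalIntegral.integral_mono_on hatt hintc
        (hint (a * t) t ht0 hatt) hcomp
      have hcalc : ∫ u in a * t..t, M' * (1 / u) = M' * Real.log (1 / a) := by
        have htne : t ≠ 0 := ne_of_gt (lt_of_lt_of_le zero_lt_one (le_trans h1at hatt))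
        rw [intervalIntegral.integral_const_mul, integral_one_div]
        · rw [mul_comm a t, div_mul_eq_div_div, div_self htne]
        · rw [Set.uIcc_of_le hatt]
          intro hc
          exact absurd (le_trans h1at hc.1) (by norm_num)
      rw [hcalc] at hmono
      linarith
    have hexp : Filter.Tendsto (fun t => Real.exp (-(∫ u in a * t..t, h u)))
        Filter.atTop (nhds 0) :=
      Real.tendsto_exp_atBot.comp (tendsto_neg_atTop_atBot.comp hI)
    refine hexp.congr' ?_
    filter_upwards [eventually_ge_atTop (max (t₀ / a) (max t₀ 0))] with t ht
    have ht0 : t₀ ≤ t := le_trans (le_max_left _ _) (le_max_right _ _) |>.trans ht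
    have htnn : (0:ℝ) ≤ t := le_trans (le_max_right _ _) (le_max_right _ _) |>.trans ht
    have hat0 : t₀ ≤ a * t := by
      rw [← div_le_iff₀' ha]; exact le_trans (le_max_left _ _) ht
    have hatt : a * t ≤ t := by nlinarith
    have hadd := intervalIntegral.integral_add_adjacent_intervals
      (hint t₀ (a*t) le_rfl hat0) (hint (a*t) t hat0 hatt)
    rw [heq t ht0, heq (a*t) hat0, mul_div_mul_left _ _ (ne_of_gt hpos), ← Real.exp_sub]
    congr 1
    linarith [hadd]
  refine ⟨main, ?_⟩
  intro a b ha hab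
  have hb : 0 < b := lt_trans ha hab
  have h1 := main (a / b) (div_pos ha hb) ((div_lt_one hb).2 hab)
  have h2 : Filter.Tendsto (fun t : ℝ => t / a) Filter.atTop Filter.atTop :=
    Filter.Tendsto.atTop_div_const ha tendsto_id
  have := h1.comp h2
  refine this.congr ?_
  intro t
  simp only [Function.comp]
  have : a / b * (t / a) = t / b := by field_simp
  rw [this]
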